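/- Let U = ⊕_{i≥0} U₁^{⊗_B i} be the tensor algebra over a k-algebra B of a B-bimodule U₁, graded with |B| = 0 and |U₁| = 1, equipped with a degree-1 derivation d satisfying d² = 0. Let (d(B)) be the sub-bimodule of U₁ generated by the degree-1 component of d applied to B, set W = U₁/(d(B)), and let π : U₁ → W be the projection. Then the component d₁ : U₁ → U₁ ⊗_B U₁ of d descends to a well-defined B-bimodule map μ : W → W ⊗_B W satisfying (π⊗π)∘d₁ = μ∘π, and μ is coassociative. -/

import Mathlib

/-!  A minimal development of the tensor product `M ⊗_B N` over a
(possibly noncommutative) `k`-algebra `B`, where `M` is a right `B`-module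
(via `Bᵐᵒᵖ`) and `N` is a left `B`-module.  It is realized as the quotient of
`M ⊗[k] N` by the balancing relations. -/

open TensorProduct MulOpposite

set_option linter.unusedSectionVars false

section TBLib

variable (k : Type) [Field k] (B : Type) [Ring B] [Algebra k B]

variable (M N : Type)
  [AddCommGroup M] [Module k M] [Module Bᵐᵒᵖ M] [IsScalarTower k Bᵐᵒᵖ M]
  [AddCommGroup N] [Module k N] [Module B N] [IsScalarTower k B N]

/-- The balancing relations for the tensor product over `B`. -/
def balRel : Submodule k (M ⊗[k] N) :=
  Submodule.span k {x | ∃ (b : B) (m : M) (n : N), x = (op b • m) ⊗ₜ[k] n - m ⊗ₜ[k] (b • n)}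

/-- The tensor product `M ⊗_B N` over the algebra `B`. -/
abbrev TB : Type := (M ⊗[k] N) ⧸ balRel k B M N

noncomputable def TB.mk : M →ₗ[k] N →ₗ[k] TB k B M N :=
  (TensorProduct.mk k M N).compr₂ (balRel k B M N).mkQ

lemma TB.mk_def (m : M) (n : N) :
    TB.mk k B M N m n = Submodule.Quotient.mk (m ⊗ₜ[k] n) := rfl

lemma TB.mk_balance (b : B) (m : M) (n : N) :
    TB.mk k B M N (op b • m) n = TB.mk k B M N m (b • n) := by
  rw [TB.mk_def, TB.mk_def, Submodule.Quotient.eq]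
  exact Submodule.subset_span ⟨b, m, n, rfl⟩

theorem TB.ind {p : TB k B M N → Prop} (h0 : p 0)
    (hmk : ∀ m n, p (TB.mk k B M N m n))
    (hadd : ∀ x y, p x → p y → p (x + y)) : ∀ x, p x := by
  intro x
  obtain ⟨y, rfl⟩ := Submodule.Quotient.mk_surjective _ x
  induction y using TensorProduct.induction_on with
  | zero => simpa using h0
  | tmul m n => exact hmk m n
  | add a b ha hb => rw [Submodule.Quotient.mk_add]; exact hadd _ _ ha hb

theorem TB.hom_ext {P : Type} [AddCommGroup P] [Module k P]
    {f g : TB k B M N →ₗ[k] P}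
    (h : ∀ m n, f (TB.mk k B M N m n) = g (TB.mk k B M N m n)) : f = g := by
  apply LinearMap.ext; intro x
  refine TB.ind k B M N (p := fun x => f x = g x) (by simp) h (fun a b ha hb => ?_) x
  simp [map_add, ha, hb]

noncomputable def TB.lift {P : Type} [AddCommGroup P] [Module k P]
    (φ : M →ₗ[k] N →ₗ[k] P)
    (hφ : ∀ (b : B) (m : M) (n : N), φ (op b • m) n = φ m (b • n)) :
    TB k B M N →ₗ[k] P :=
  Submodule.liftQ _ (TensorProduct.lift φ) (by
    rw [balRel, Submodule.span_le]
    rintro x ⟨b, m, n, rfl⟩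
    simp only [SetLike.mem_coe, LinearMap.mem_ker, map_sub, TensorProduct.lift.tmul, hφ, sub_self])

@[simp] lemma TB.lift_mk {P : Type} [AddCommGroup P] [Module k P]
    (φ : M →ₗ[k] N →ₗ[k] P) (hφ : ∀ (b : B) (m : M) (n : N), φ (op b • m) n = φ m (b • n))
    (m : M) (n : N) :
    TB.lift k B M N φ hφ (TB.mk k B M N m n) = φ m n := rfl


section SmulLin

variable {S : Type} [Ring S] [Module S M] [SMulCommClass k S M]

/-- Scalar multiplication by `s : S` as a `k`-linear map. -/
def smulLin (s : S) : M →ₗ[k] M where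
  toFun m := s • m
  map_add' a b := smul_add s a b
  map_smul' c m := (smul_comm c s m).symm

@[simp] lemma smulLin_apply (s : S) (m : M) : smulLin k M s m = s • m := rfl

end SmulLin

section LeftAction

variable {S : Type} [Ring S] [Module S M] [SMulCommClass S Bᵐᵒᵖ M] [SMulCommClass k S M]

noncomputable def TB.lsmulHom (s : S) : TB k B M N →ₗ[k] TB k B M N :=
  TB.lift k B M N
    ((TB.mk k B M N).comp (smulLin k M s))
    (by
      intro b m n
      show TB.mk k B M N (s • (op b • m)) n = TB.mk k B M N (s • m) (b • n)
      rw [smul_comm s (op b) m, TB.mk_balance])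

@[simp] lemma TB.lsmulHom_mk (s : S) (m : M) (n : N) :
    TB.lsmulHom k B M N s (TB.mk k B M N m n) = TB.mk k B M N (s • m) n := rfl

/-- The left action of a ring `S` (acting on `M` on the left, commuting with the
right `B`-action) on `M ⊗_B N`. -/
noncomputable def TB.moduleLeft : Module S (TB k B M N) where
  smul s x := TB.lsmulHom k B M N s x
  one_smul x := by
    refine TB.ind k B M N (p := fun x => TB.lsmulHom k B M N (1 : S) x = x)
      (by simp) (fun m n => by simp) (fun a b ha hb => ?_) x
    simp only [map_add, ha, hb]
  mul_smul s t x := by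
    refine TB.ind k B M N
      (p := fun x => TB.lsmulHom k B M N (s * t) x
        = TB.lsmulHom k B M N s (TB.lsmulHom k B M N t x))
      (by simp) (fun m n => by simp [mul_smul]) (fun a b ha hb => ?_) x
    simp only [map_add, ha, hb]
  smul_zero s := map_zero _
  smul_add s x y := map_add _ x y
  add_smul s t x := by
    refine TB.ind k B M N
      (p := fun x => TB.lsmulHom k B M N (s + t) x
        = TB.lsmulHom k B M N s x + TB.lsmulHom k B M N t x)
      (by simp) (fun m n => by simp [add_smul, map_add]) (fun a b ha hb => ?_) x
    simp only [map_add, ha, hb]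
    abel
  zero_smul x := by
    refine TB.ind k B M N (p := fun x => TB.lsmulHom k B M N (0 : S) x = 0)
      (by simp) (fun m n => by simp) (fun a b ha hb => ?_) x
    simp only [map_add, ha, hb, add_zero]

end LeftAction

section LeftB

variable [Module B M] [IsScalarTower k B M] [SMulCommClass B Bᵐᵒᵖ M]

noncomputable instance TB.instModuleLeftB : Module B (TB k B M N) :=
  TB.moduleLeft k B M N (S := B)

@[simp] lemma TB.smul_mk (b : B) (m : M) (n : N) :
    b • TB.mk k B M N m n = TB.mk k B M N (b • m) n := rfl

instance TB.instTowerLeftB : IsScalarTower k B (TB k B M N) := by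
  constructor
  intro c b x
  refine TB.ind k B M N (p := fun x => (c • b) • x = c • b • x)
    (by simp) (fun m n => ?_) (fun a y ha hy => ?_) x
  · show (c • b) • TB.mk k B M N m n = c • b • TB.mk k B M N m n
    rw [TB.smul_mk, TB.smul_mk, smul_assoc, map_smul, LinearMap.smul_apply]
  · show (c • b) • (a + y) = c • b • (a + y)
    rw [smul_add, smul_add, smul_add]
    exact congrArg₂ (· + ·) ha hy

end LeftB

section RightB

variable [Module Bᵐᵒᵖ N] [IsScalarTower k Bᵐᵒᵖ N] [SMulCommClass B Bᵐᵒᵖ N]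

noncomputable def TB.rsmulHom (b : Bᵐᵒᵖ) : TB k B M N →ₗ[k] TB k B M N :=
  TB.lift k B M N
    ((TB.mk k B M N).compl₂ (smulLin k N b))
    (by
      intro c m n
      show TB.mk k B M N (op c • m) (b • n) = TB.mk k B M N m (b • (c • n))
      rw [TB.mk_balance, smul_comm c b n])

@[simp] lemma TB.rsmulHom_mk (b : Bᵐᵒᵖ) (m : M) (n : N) :
    TB.rsmulHom k B M N b (TB.mk k B M N m n) = TB.mk k B M N m (b • n) := rfl

noncomputable instance TB.instModuleRightB : Module Bᵐᵒᵖ (TB k B M N) where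
  smul b x := TB.rsmulHom k B M N b x
  one_smul x := by
    refine TB.ind k B M N (p := fun x => TB.rsmulHom k B M N (1 : Bᵐᵒᵖ) x = x)
      (by simp) (fun m n => by simp) (fun a b ha hb => ?_) x
    simp only [map_add, ha, hb]
  mul_smul s t x := by
    refine TB.ind k B M N
      (p := fun x => TB.rsmulHom k B M N (s * t) x
        = TB.rsmulHom k B M N s (TB.rsmulHom k B M N t x))
      (by simp) (fun m n => by simp [mul_smul]) (fun a b ha hb => ?_) x
    simp only [map_add, ha, hb]
  smul_zero s := map_zero _
  smul_add s x y := map_add _ x y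
  add_smul s t x := by
    refine TB.ind k B M N
      (p := fun x => TB.rsmulHom k B M N (s + t) x
        = TB.rsmulHom k B M N s x + TB.rsmulHom k B M N t x)
      (by simp) (fun m n => by simp [add_smul, map_add]) (fun a b ha hb => ?_) x
    simp only [map_add, ha, hb]
    abel
  zero_smul x := by
    refine TB.ind k B M N (p := fun x => TB.rsmulHom k B M N (0 : Bᵐᵒᵖ) x = 0)
      (by simp) (fun m n => by simp) (fun a b ha hb => ?_) x
    simp only [map_add, ha, hb, add_zero]

@[simp] lemma TB.op_smul_mk (b : Bᵐᵒᵖ) (m : M) (n : N) :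
    b • TB.mk k B M N m n = TB.mk k B M N m (b • n) := rfl

instance TB.instTowerRightB : IsScalarTower k Bᵐᵒᵖ (TB k B M N) := by
  constructor
  intro c b x
  refine TB.ind k B M N (p := fun x => (c • b) • x = c • b • x)
    (by simp) (fun m n => ?_) (fun a y ha hy => ?_) x
  · show (c • b) • TB.mk k B M N m n = c • b • TB.mk k B M N m n
    rw [TB.op_smul_mk, TB.op_smul_mk, smul_assoc, map_smul]
  · show (c • b) • (a + y) = c • b • (a + y)
    rw [smul_add, smul_add, smul_add]
    exact congrArg₂ (· + ·) ha hy

end RightB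

section Map

variable {M' N' : Type}
  [AddCommGroup M'] [Module k M'] [Module Bᵐᵒᵖ M'] [IsScalarTower k Bᵐᵒᵖ M']
  [AddCommGroup N'] [Module k N'] [Module B N'] [IsScalarTower k B N']

noncomputable def TB.map (f : M →ₗ[k] M') (g : N →ₗ[k] N')
    (hf : ∀ (b : B) (m : M), f (op b • m) = op b • f m)
    (hg : ∀ (b : B) (n : N), g (b • n) = b • g n) :
    TB k B M N →ₗ[k] TB k B M' N' :=
  TB.lift k B M N ((TB.mk k B M' N').compl₁₂ f g)
    (by intro b m n; simp [LinearMap.compl₁₂_apply, hf, hg, TB.mk_balance])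

@[simp] lemma TB.map_mk (f : M →ₗ[k] M') (g : N →ₗ[k] N')
    (hf : ∀ (b : B) (m : M), f (op b • m) = op b • f m)
    (hg : ∀ (b : B) (n : N), g (b • n) = b • g n) (m : M) (n : N) :
    TB.map k B M N f g hf hg (TB.mk k B M N m n) = TB.mk k B M' N' (f m) (g n) := rfl

end Map


section Assoc

variable (P : Type) [AddCommGroup P] [Module k P] [Module B P] [IsScalarTower k B P]
variable [Module B N] [IsScalarTower k B N]
variable [Module Bᵐᵒᵖ N] [IsScalarTower k Bᵐᵒᵖ N] [SMulCommClass B Bᵐᵒᵖ N]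

noncomputable def TB.innerPsi : P →ₗ[k] (TB k B M N →ₗ[k] TB k B M (TB k B N P)) where
  toFun p := TB.lift k B M N
      ((TB.mk k B M (TB k B N P)).compl₂ ((TB.mk k B N P).flip p))
      (by
        intro b m n
        simp only [LinearMap.compl₂_apply, LinearMap.flip_apply]
        rw [TB.mk_balance k B M (TB k B N P) b m, TB.smul_mk])
  map_add' p q := TB.hom_ext k B M N (by intro m n; simp [map_add])
  map_smul' c p := TB.hom_ext k B M N (by intro m n; simp)

noncomputable def TB.assocMap :
    TB k B (TB k B M N) P →ₗ[k] TB k B M (TB k B N P) :=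
  TB.lift k B (TB k B M N) P (TB.innerPsi k B M N P).flip
    (by
      intro b x p
      simp only [LinearMap.flip_apply]
      refine TB.ind k B M N
        (p := fun x => TB.innerPsi k B M N P p (op b • x)
          = TB.innerPsi k B M N P (b • p) x)
        (by simp) (fun m n => ?_) (fun a y ha hy => ?_) x
      · show TB.innerPsi k B M N P p (op b • TB.mk k B M N m n)
          = TB.innerPsi k B M N P (b • p) (TB.mk k B M N m n)
        rw [TB.op_smul_mk]
        simp only [TB.innerPsi, LinearMap.coe_mk, AddHom.coe_mk, TB.lift_mk,
          LinearMap.compl₂_apply, LinearMap.flip_apply]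
        rw [TB.mk_balance]
      · show TB.innerPsi k B M N P p (op b • (a + y))
          = TB.innerPsi k B M N P (b • p) (a + y)
        rw [smul_add, map_add, map_add]
        exact congrArg₂ (· + ·) ha hy)

@[simp] lemma TB.assocMap_mk (m : M) (n : N) (p : P) :
    TB.assocMap k B M N P (TB.mk k B (TB k B M N) P (TB.mk k B M N m n) p)
      = TB.mk k B M (TB k B N P) m (TB.mk k B N P n p) := rfl

end Assoc

end TBLib

set_option maxHeartbeats 1600000

section Stmt5

variable (k B : Type) [Field k] [Ring B] [Algebra k B]
variable (U : Type) [AddCommGroup U] [Module k U] [Module B U] [Module Bᵐᵒᵖ U]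
  [IsScalarTower k B U] [IsScalarTower k Bᵐᵒᵖ U] [SMulCommClass B Bᵐᵒᵖ U]
variable (d0 : B →ₗ[k] U) (d1 : U →ₗ[k] TB k B U U)

/-- The sub-bimodule `(d(B)) ⊆ U₁` generated by the degree-one component of `d`
applied to `B`. -/
def dSub : Submodule k U :=
  Submodule.span k {x | ∃ (a b c : B), x = a • (op b • d0 c)}

lemma dSub_smul_left (b : B) {x : U} (hx : x ∈ dSub k B U d0) :
    b • x ∈ dSub k B U d0 := by
  induction hx using Submodule.span_induction with
  | mem y hy =>
    obtain ⟨a, b', c, rfl⟩ := hy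
    exact Submodule.subset_span ⟨b * a, b', c, by rw [mul_smul]⟩
  | zero => simp
  | add y z _ _ hy hz => rw [smul_add]; exact Submodule.add_mem _ hy hz
  | smul c y _ hy => rw [smul_comm b c y]; exact Submodule.smul_mem _ c hy

lemma dSub_smul_right (b : B) {x : U} (hx : x ∈ dSub k B U d0) :
    op b • x ∈ dSub k B U d0 := by
  induction hx using Submodule.span_induction with
  | mem y hy =>
    obtain ⟨a, b', c, rfl⟩ := hy
    refine Submodule.subset_span ⟨a, b' * b, c, ?_⟩
    rw [← smul_comm a (op b) (op b' • d0 c), smul_smul, ← MulOpposite.op_mul]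
  | zero => simp
  | add y z _ _ hy hz => rw [smul_add]; exact Submodule.add_mem _ hy hz
  | smul c y _ hy => rw [smul_comm (op b) c y]; exact Submodule.smul_mem _ c hy

/-- The quotient bimodule `W = U₁ / (d(B))`. -/
abbrev Wq : Type := U ⧸ dSub k B U d0

noncomputable def lActW (b : B) : Wq k B U d0 →ₗ[k] Wq k B U d0 :=
  Submodule.mapQ _ _ (smulLin k U b) (fun x hx => dSub_smul_left k B U d0 b hx)

@[simp] lemma lActW_mk (b : B) (u : U) :
    lActW k B U d0 b (Submodule.Quotient.mk u) = (Submodule.Quotient.mk (b • u) : Wq k B U d0) := by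
  rfl

noncomputable def rActW (b : Bᵐᵒᵖ) : Wq k B U d0 →ₗ[k] Wq k B U d0 :=
  Submodule.mapQ _ _ (smulLin k U b) (fun x hx => dSub_smul_right k B U d0 b.unop (by simpa using hx))

@[simp] lemma rActW_mk (b : Bᵐᵒᵖ) (u : U) :
    rActW k B U d0 b (Submodule.Quotient.mk u) = (Submodule.Quotient.mk (b • u) : Wq k B U d0) := by
  rfl

noncomputable instance : Module B (Wq k B U d0) where
  smul b x := lActW k B U d0 b x
  one_smul x := by
    obtain ⟨u, rfl⟩ := Submodule.Quotient.mk_surjective _ x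
    show lActW k B U d0 1 _ = _
    simp
  mul_smul a b x := by
    obtain ⟨u, rfl⟩ := Submodule.Quotient.mk_surjective _ x
    show lActW k B U d0 (a * b) _ = lActW k B U d0 a (lActW k B U d0 b _)
    simp [mul_smul]
  smul_zero b := map_zero (lActW k B U d0 b)
  smul_add b x y := map_add (lActW k B U d0 b) x y
  add_smul a b x := by
    obtain ⟨u, rfl⟩ := Submodule.Quotient.mk_surjective _ x
    show lActW k B U d0 (a + b) _ = lActW k B U d0 a _ + lActW k B U d0 b _
    simp [add_smul]
  zero_smul x := by
    obtain ⟨u, rfl⟩ := Submodule.Quotient.mk_surjective _ x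
    show lActW k B U d0 0 _ = 0
    simp

@[simp] lemma smul_mkQ (b : B) (u : U) :
    b • (Submodule.Quotient.mk u : Wq k B U d0) = Submodule.Quotient.mk (b • u) :=
  lActW_mk k B U d0 b u

noncomputable instance : Module Bᵐᵒᵖ (Wq k B U d0) where
  smul b x := rActW k B U d0 b x
  one_smul x := by
    obtain ⟨u, rfl⟩ := Submodule.Quotient.mk_surjective _ x
    show rActW k B U d0 1 _ = _
    simp
  mul_smul a b x := by
    obtain ⟨u, rfl⟩ := Submodule.Quotient.mk_surjective _ x
    show rActW k B U d0 (a * b) _ = rActW k B U d0 a (rActW k B U d0 b _)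
    simp [mul_smul]
  smul_zero b := map_zero (rActW k B U d0 b)
  smul_add b x y := map_add (rActW k B U d0 b) x y
  add_smul a b x := by
    obtain ⟨u, rfl⟩ := Submodule.Quotient.mk_surjective _ x
    show rActW k B U d0 (a + b) _ = rActW k B U d0 a _ + rActW k B U d0 b _
    simp [add_smul]
  zero_smul x := by
    obtain ⟨u, rfl⟩ := Submodule.Quotient.mk_surjective _ x
    show rActW k B U d0 0 _ = 0
    simp

@[simp] lemma op_smul_mkQ (b : Bᵐᵒᵖ) (u : U) :
    b • (Submodule.Quotient.mk u : Wq k B U d0) = Submodule.Quotient.mk (b • u) :=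
  rActW_mk k B U d0 b u

instance : IsScalarTower k B (Wq k B U d0) := by
  constructor
  intro c b x
  obtain ⟨u, rfl⟩ := Submodule.Quotient.mk_surjective _ x
  simp [smul_assoc]

instance : IsScalarTower k Bᵐᵒᵖ (Wq k B U d0) := by
  constructor
  intro c b x
  obtain ⟨u, rfl⟩ := Submodule.Quotient.mk_surjective _ x
  simp [smul_assoc]

instance : SMulCommClass B Bᵐᵒᵖ (Wq k B U d0) := by
  constructor
  intro b b' x
  obtain ⟨u, rfl⟩ := Submodule.Quotient.mk_surjective _ x
  simp only [op_smul_mkQ, smul_mkQ]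
  exact congrArg _ (smul_comm b b' u)

lemma mkQ_equiv_left (b : B) (u : U) :
    (dSub k B U d0).mkQ (b • u) = b • (dSub k B U d0).mkQ u :=
  (smul_mkQ k B U d0 b u).symm

lemma mkQ_equiv_right (b : B) (u : U) :
    (dSub k B U d0).mkQ (op b • u) = op b • (dSub k B U d0).mkQ u :=
  (op_smul_mkQ k B U d0 (op b) u).symm

/-- The bilinear map underlying the degree-one component of `d` on `U₁ ⊗_B U₁`
(Koszul–Quillen signs: `d(u ⊗ u') = d(u) ⊗ u' − u ⊗ d(u')`), with values in the
triple tensor product. -/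
noncomputable def D2bil : U →ₗ[k] U →ₗ[k] TB k B U (TB k B U U) :=
  LinearMap.mk₂ k
    (fun u v => TB.assocMap k B U U U (TB.mk k B (TB k B U U) U (d1 u) v)
      - TB.mk k B U (TB k B U U) u (d1 v))
    (fun u1 u2 v => by
      simp only [map_add, LinearMap.add_apply]
      abel)
    (fun c u v => by
      simp only [map_smul, LinearMap.smul_apply, smul_sub])
    (fun u v1 v2 => by
      simp only [map_add, LinearMap.add_apply]
      abel)
    (fun c u v => by
      simp only [map_smul, LinearMap.smul_apply, smul_sub])

/-- The differential on `U₁ ⊗_B U₁` with values in `U₁ ⊗_B U₁ ⊗_B U₁`. -/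
noncomputable def D2
    (hd1l : ∀ (b : B) (u : U), d1 (b • u) = TB.mk k B U U (d0 b) u + b • d1 u)
    (hd1r : ∀ (b : B) (u : U), d1 (op b • u) = op b • d1 u - TB.mk k B U U u (d0 b)) :
    TB k B U U →ₗ[k] TB k B U (TB k B U U) :=
  TB.lift k B U U (D2bil k B U d1) (by
    intro b u v
    show TB.assocMap k B U U U (TB.mk k B (TB k B U U) U (d1 (op b • u)) v)
        - TB.mk k B U (TB k B U U) (op b • u) (d1 v)
      = TB.assocMap k B U U U (TB.mk k B (TB k B U U) U (d1 u) (b • v))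
        - TB.mk k B U (TB k B U U) u (d1 (b • v))
    rw [hd1r b u, hd1l b v]
    simp only [map_sub, map_add, LinearMap.sub_apply, LinearMap.add_apply,
      TB.mk_balance, TB.assocMap_mk, map_add]
    abel)


section Aux

variable (k B : Type) [Field k] [Ring B] [Algebra k B]
variable (U : Type) [AddCommGroup U] [Module k U] [Module B U] [Module Bᵐᵒᵖ U]
  [IsScalarTower k B U] [IsScalarTower k Bᵐᵒᵖ U] [SMulCommClass B Bᵐᵒᵖ U]
variable (d0 : B →ₗ[k] U) (d1 : U →ₗ[k] TB k B U U)

/-- The projection `U ⊗_B U → W ⊗_B W`. -/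
noncomputable def piMap : TB k B U U →ₗ[k] TB k B (Wq k B U d0) (Wq k B U d0) :=
  TB.map k B U U (dSub k B U d0).mkQ (dSub k B U d0).mkQ
    (mkQ_equiv_right k B U d0) (mkQ_equiv_left k B U d0)

@[simp] lemma piMap_mk (u v : U) :
    piMap k B U d0 (TB.mk k B U U u v)
      = TB.mk k B (Wq k B U d0) (Wq k B U d0)
          ((dSub k B U d0).mkQ u) ((dSub k B U d0).mkQ v) := rfl

lemma piMap_lsmul (b : B) (x : TB k B U U) :
    piMap k B U d0 (b • x) = b • piMap k B U d0 x := by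
  refine TB.ind k B U U (p := fun x => piMap k B U d0 (b • x) = b • piMap k B U d0 x)
    (by simp) (fun m n => ?_) (fun a y ha hy => ?_) x
  · beta_reduce
    rw [TB.smul_mk, piMap_mk, piMap_mk, TB.smul_mk]
    rw [mkQ_equiv_left]
  · beta_reduce at ha hy ⊢
    rw [smul_add, map_add, map_add, smul_add, ha, hy]

lemma piMap_rsmul (b : Bᵐᵒᵖ) (x : TB k B U U) :
    piMap k B U d0 (b • x) = b • piMap k B U d0 x := by
  refine TB.ind k B U U (p := fun x => piMap k B U d0 (b • x) = b • piMap k B U d0 x)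
    (by simp) (fun m n => ?_) (fun a y ha hy => ?_) x
  · beta_reduce
    rw [TB.op_smul_mk, piMap_mk, piMap_mk, TB.op_smul_mk]
    rw [← op_unop b, mkQ_equiv_right]
  · beta_reduce at ha hy ⊢
    rw [smul_add, map_add, map_add, smul_add, ha, hy]

lemma mkQ_d0 (b : B) : (dSub k B U d0).mkQ (d0 b) = 0 := by
  rw [Submodule.mkQ_apply, Submodule.Quotient.mk_eq_zero]
  exact Submodule.subset_span ⟨1, 1, b, by simp⟩

lemma mkQ_opd0 (b c : B) : (dSub k B U d0).mkQ (op b • d0 c) = 0 := by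
  rw [Submodule.mkQ_apply, Submodule.Quotient.mk_eq_zero]
  exact Submodule.subset_span ⟨1, b, c, by simp⟩

lemma piMap_d1_ker
    (hd1l : ∀ (b : B) (u : U), d1 (b • u) = TB.mk k B U U (d0 b) u + b • d1 u)
    (hd1r : ∀ (b : B) (u : U), d1 (op b • u) = op b • d1 u - TB.mk k B U U u (d0 b))
    (hd2B : ∀ b : B, d1 (d0 b) = 0) :
    ∀ x ∈ dSub k B U d0, piMap k B U d0 (d1 x) = 0 := by
  intro x hx
  induction hx using Submodule.span_induction with
  | mem y hy =>
    obtain ⟨a, b, c, rfl⟩ := hy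
    rw [hd1l, hd1r, hd2B, smul_zero, zero_sub, smul_neg, map_add, map_neg,
      piMap_lsmul, piMap_mk, piMap_mk, mkQ_d0, mkQ_d0]
    simp
  | zero => simp
  | add y z _ _ hy hz => rw [map_add, map_add, hy, hz, add_zero]
  | smul c y _ hy => rw [map_smul, map_smul, hy, smul_zero]

end Aux

/-- Let `U = ⊕ U₁^{⊗_B i}` be the tensor algebra of a
`B`-bimodule `U₁`, with `B` in degree `0` and `U₁` in degree `1`, equipped with
a square-zero degree-one derivation `d` (described by its components
`d₀ : B → U₁` and `d₁ : U₁ → U₁ ⊗_B U₁`).  Then `d₁` descends to a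
well-defined coassociative comultiplication `μ` on `W = U₁/(d(B))` with
`(π ⊗ π) ∘ d₁ = μ ∘ π`. -/
theorem dg_tensor_algebra_gives_prebox
    (hd0 : ∀ a b : B, d0 (a * b) = a • d0 b + op b • d0 a)
    (hd1l : ∀ (b : B) (u : U), d1 (b • u) = TB.mk k B U U (d0 b) u + b • d1 u)
    (hd1r : ∀ (b : B) (u : U), d1 (op b • u) = op b • d1 u - TB.mk k B U U u (d0 b))
    (hd2B : ∀ b : B, d1 (d0 b) = 0)
    (hd2U : ∀ u : U, D2 k B U d0 d1 hd1l hd1r (d1 u) = 0) :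
    ∃ μ : Wq k B U d0 →ₗ[k] TB k B (Wq k B U d0) (Wq k B U d0),
      (∀ u : U, μ ((dSub k B U d0).mkQ u)
        = TB.map k B U U (dSub k B U d0).mkQ (dSub k B U d0).mkQ
            (mkQ_equiv_right k B U d0) (mkQ_equiv_left k B U d0) (d1 u)) ∧
      ∃ (hl : ∀ (b : B) (w : Wq k B U d0), μ (b • w) = b • μ w)
        (hr : ∀ (b : B) (w : Wq k B U d0), μ (op b • w) = op b • μ w),
        ∀ w : Wq k B U d0,
          TB.assocMap k B (Wq k B U d0) (Wq k B U d0) (Wq k B U d0)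
            ((TB.map k B (Wq k B U d0) (Wq k B U d0) μ LinearMap.id hr
              (fun _ _ => rfl)) (μ w))
          = (TB.map k B (Wq k B U d0) (Wq k B U d0) LinearMap.id μ
              (fun _ _ => rfl) hl) (μ w) := by
  have hle : dSub k B U d0 ≤ LinearMap.ker ((piMap k B U d0).comp d1) := fun x hx =>
    LinearMap.mem_ker.mpr (piMap_d1_ker k B U d0 d1 hd1l hd1r hd2B x hx)
  let μ : Wq k B U d0 →ₗ[k] TB k B (Wq k B U d0) (Wq k B U d0) :=
    Submodule.liftQ (dSub k B U d0) ((piMap k B U d0).comp d1) hle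
  have μmk : ∀ u : U, μ (Submodule.Quotient.mk u) = piMap k B U d0 (d1 u) :=
    fun u => rfl
  have hl : ∀ (b : B) (w : Wq k B U d0), μ (b • w) = b • μ w := by
    intro b w
    obtain ⟨u, rfl⟩ := Submodule.Quotient.mk_surjective _ w
    rw [smul_mkQ, μmk, μmk, hd1l, map_add, piMap_lsmul, piMap_mk, mkQ_d0]
    simp
  have hr : ∀ (b : B) (w : Wq k B U d0), μ (op b • w) = op b • μ w := by
    intro b w
    obtain ⟨u, rfl⟩ := Submodule.Quotient.mk_surjective _ w
    rw [op_smul_mkQ, μmk, μmk, hd1r, map_sub, piMap_rsmul, piMap_mk, mkQ_d0]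
    simp
  let Q : TB k B U (TB k B U U)
      →ₗ[k] TB k B (Wq k B U d0) (TB k B (Wq k B U d0) (Wq k B U d0)) :=
    TB.map k B U (TB k B U U) (dSub k B U d0).mkQ (piMap k B U d0)
      (mkQ_equiv_right k B U d0) (piMap_lsmul k B U d0)
  have inner : ∀ (y : TB k B U U) (v : U),
      Q (TB.assocMap k B U U U (TB.mk k B (TB k B U U) U y v))
        = TB.assocMap k B (Wq k B U d0) (Wq k B U d0) (Wq k B U d0)
            (TB.mk k B (TB k B (Wq k B U d0) (Wq k B U d0)) (Wq k B U d0)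
              (piMap k B U d0 y) ((dSub k B U d0).mkQ v)) := by
    intro y v
    refine TB.ind k B U U
      (p := fun y => Q (TB.assocMap k B U U U (TB.mk k B (TB k B U U) U y v))
        = TB.assocMap k B (Wq k B U d0) (Wq k B U d0) (Wq k B U d0)
            (TB.mk k B (TB k B (Wq k B U d0) (Wq k B U d0)) (Wq k B U d0)
              (piMap k B U d0 y) ((dSub k B U d0).mkQ v)))
      (by simp) (fun a b => rfl) (fun x y hx hy => ?_) y
    beta_reduce at hx hy ⊢
    simp only [map_add, LinearMap.add_apply, hx, hy]
  have key : ∀ x : TB k B U U,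
      Q (D2 k B U d0 d1 hd1l hd1r x)
        = TB.assocMap k B (Wq k B U d0) (Wq k B U d0) (Wq k B U d0)
            ((TB.map k B (Wq k B U d0) (Wq k B U d0) μ LinearMap.id hr
              (fun _ _ => rfl)) (piMap k B U d0 x))
          - (TB.map k B (Wq k B U d0) (Wq k B U d0) LinearMap.id μ
              (fun _ _ => rfl) hl) (piMap k B U d0 x) := by
    intro x
    refine TB.ind k B U U
      (p := fun x => Q (D2 k B U d0 d1 hd1l hd1r x)
        = TB.assocMap k B (Wq k B U d0) (Wq k B U d0) (Wq k B U d0)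
            ((TB.map k B (Wq k B U d0) (Wq k B U d0) μ LinearMap.id hr
              (fun _ _ => rfl)) (piMap k B U d0 x))
          - (TB.map k B (Wq k B U d0) (Wq k B U d0) LinearMap.id μ
              (fun _ _ => rfl) hl) (piMap k B U d0 x))
      (by simp) (fun u v => ?_) (fun x y hx hy => ?_) x
    · beta_reduce
      have h1 : D2 k B U d0 d1 hd1l hd1r (TB.mk k B U U u v)
          = TB.assocMap k B U U U (TB.mk k B (TB k B U U) U (d1 u) v)
            - TB.mk k B U (TB k B U U) u (d1 v) := rfl
      rw [h1, map_sub, inner (d1 u) v]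
      rfl
    · beta_reduce at hx hy ⊢
      simp only [map_add, LinearMap.add_apply, hx, hy]
      abel
  refine ⟨μ, fun u => rfl, hl, hr, ?_⟩
  intro w
  obtain ⟨u, rfl⟩ := Submodule.Quotient.mk_surjective _ w
  have h0 := key (d1 u)
  rw [hd2U u, map_zero] at h0
  exact sub_eq_zero.mp h0.symm

end Stmt5
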